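/- arXiv:1807.03432 — 2 statements merged into one kernel-verified Lean document; each statement's English description precedes it below -/
import Mathlib

section
/- Let f : ℝ → ℝ and K ≥ 0 be such that the function x ↦ f(x) + K·x² is convex on ℝ (i.e., f is semiconvex with semiconvexity constant 2K). If f attains a local maximum at a point x₀ ∈ ℝ, then f is differentiable at x₀ and f'(x₀) = 0. -/
set_option maxHeartbeats 1000000


/-- If `f + K x²` is convex on `ℝ` (semiconvexity with constant `2K`, `K ≥ 0`) and `f`
attains a local maximum at `x₀`, then `f` is differentiable at `x₀` with `f'(x₀) = 0`. -/
theorem semiconvex_isLocalMax_differentiableAt_deriv_eq_zero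
    (f : ℝ → ℝ) (K : ℝ) (hK : 0 ≤ K)
    (hconv : ConvexOn ℝ Set.univ (fun x : ℝ => f x + K * x ^ 2))
    (x₀ : ℝ) (hmax : IsLocalMax f x₀) :
    DifferentiableAt ℝ f x₀ ∧ deriv f x₀ = 0 := by
  set g : ℝ → ℝ := fun x => f x + K * x ^ 2 with hgdef
  clear_value g
  obtain ⟨δ, hδ, hball⟩ := Metric.eventually_nhds_iff.mp hmax
  have key : ∀ y : ℝ, dist y x₀ < δ → g y - g x₀ ≤ K * (y ^ 2 - x₀ ^ 2) := by
    intro y hy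
    have hf := hball hy
    simp only [hgdef]
    nlinarith [hf]
  have hgd : HasDerivAt g (2 * K * x₀) x₀ := by
    rw [hasDerivAt_iff_tendsto_slope, Metric.tendsto_nhdsWithin_nhds]
    intro ε hε
    set d : ℝ := min (δ / 2) (ε / (2 * K + 2)) with hd
    have hdpos : 0 < d := lt_min (by linarith) (by positivity)
    have hdδ : d < δ := lt_of_le_of_lt (min_le_left _ _) (by linarith)
    have hdε : K * d ≤ ε / 2 := by
      have h1 : d ≤ ε / (2 * K + 2) := min_le_right _ _
      have h2 : K * d ≤ K * (ε / (2 * K + 2)) := by nlinarith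
      have h3 : K * (ε / (2 * K + 2)) ≤ ε / 2 := by
        rw [← mul_div_assoc, div_le_div_iff₀ (by positivity) (by norm_num)]
        nlinarith
      linarith
    clear_value d
    refine ⟨d, hdpos, ?_⟩
    intro x hx hdist
    have hxne : x ≠ x₀ := hx
    rw [Real.dist_eq] at hdist
    have hxδ : dist x x₀ < δ := by rw [Real.dist_eq]; linarith [hdist]
    have hkx := key x hxδ
    have slope_eq : slope g x₀ x = (g x - g x₀) / (x - x₀) := by
      rw [slope_def_field]
    rw [Real.dist_eq, slope_eq]
    rcases hxne.lt_or_gt with hlt | hlt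
    · -- x < x₀ ; use the point x₀ + d on the right
      have hyδ : dist (x₀ + d) x₀ < δ := by
        rw [Real.dist_eq, add_sub_cancel_left, abs_of_pos hdpos]; exact hdδ
      have hky := key (x₀ + d) hyδ
      have hmono := hconv.slope_mono_adjacent (Set.mem_univ x) (Set.mem_univ (x₀ + d))
        hlt (by linarith)
      have hxx : 0 < x₀ - x := by linarith
      have hub : (g x₀ - g x) / (x₀ - x) ≤ 2 * K * x₀ + K * d := by
        refine le_trans hmono ?_
        have hyy : (0:ℝ) < x₀ + d - x₀ := by linarith
        rw [div_le_iff₀ hyy]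
        nlinarith [hky]
      have hlb : 2 * K * x₀ - K * (x₀ - x) ≤ (g x₀ - g x) / (x₀ - x) := by
        rw [le_div_iff₀ hxx]
        nlinarith [hkx]
      have habs : |x - x₀| = x₀ - x := by rw [abs_sub_comm]; exact abs_of_pos hxx
      have hKd : K * (x₀ - x) ≤ K * d := by
        have h' : x₀ - x < d := by rw [← habs]; exact hdist
        exact mul_le_mul_of_nonneg_left h'.le hK
      have hsame : (g x - g x₀) / (x - x₀) = (g x₀ - g x) / (x₀ - x) := by
        rw [div_eq_div_iff (sub_ne_zero_of_ne hxne) hxx.ne']; ring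
      rw [hsame, abs_lt]
      constructor <;> linarith
    · -- x₀ < x ; use the point x₀ - d on the left
      have hyδ : dist (x₀ - d) x₀ < δ := by
        rw [Real.dist_eq, sub_sub_cancel_left, abs_neg, abs_of_pos hdpos]; exact hdδ
      have hky := key (x₀ - d) hyδ
      have hmono := hconv.slope_mono_adjacent (Set.mem_univ (x₀ - d)) (Set.mem_univ x)
        (by linarith) hlt
      have hxx : 0 < x - x₀ := by linarith
      have hub : (g x - g x₀) / (x - x₀) ≤ 2 * K * x₀ + K * (x - x₀) := by
        rw [div_le_iff₀ hxx]
        nlinarith [hkx]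
      have hlb : 2 * K * x₀ - K * d ≤ (g x - g x₀) / (x - x₀) := by
        refine le_trans ?_ hmono
        have hyy : (0:ℝ) < x₀ - (x₀ - d) := by linarith
        rw [le_div_iff₀ hyy]
        nlinarith [hky]
      have habs : |x - x₀| = x - x₀ := abs_of_pos hxx
      have hKd : K * (x - x₀) ≤ K * d := by
        have h' : x - x₀ < d := by rw [← habs]; exact hdist
        exact mul_le_mul_of_nonneg_left h'.le hK
      rw [abs_lt]
      constructor <;> linarith
  have hsq : HasDerivAt (fun x : ℝ => K * x ^ 2) (2 * K * x₀) x₀ := by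
    have h := (hasDerivAt_pow 2 x₀).const_mul K
    refine h.congr_deriv ?_
    simp; ring
  have hfd : HasDerivAt f 0 x₀ := by
    have h : HasDerivAt (fun x => g x - K * x ^ 2) (2 * K * x₀ - 2 * K * x₀) x₀ := hgd.sub hsq
    have hfun : (fun x => g x - K * x ^ 2) = f := by
      funext x; rw [hgdef]; ring
    rw [hfun] at h
    simpa using h
  exact ⟨hfd.differentiableAt, hfd.deriv⟩
end

section
/- Let t > 0, let u₀ : ℝ → ℝ satisfy u₀(x) ≤ u₀(0) for all x ∈ ℝ, and let r : ℝ × [0,t] → ℝ be continuous with r(x,s) ≤ r(0,s) for all x ≤ 0 and all s ∈ [0,t]. Let γ : [0,t] → ℝ be Lipschitz continuous and set γ⁺(s) = max(γ(s), 0). Then γ⁺ is Lipschitz continuous and, denoting by γ' and (γ⁺)' the almost-everywhere defined derivatives of γ and γ⁺, one has u₀(γ⁺(0)) + ∫₀ᵗ ( −(γ⁺)'(s)²/4 + r(γ⁺(s), s) ) ds ≥ u₀(γ(0)) + ∫₀ᵗ ( −γ'(s)²/4 + r(γ(s), s) ) ds. -/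
open MeasureTheory Set intervalIntegral



/-- Truncating a Lipschitz path to its positive part does not decrease the action
`F(γ) = u₀(γ(0)) + ∫₀ᵗ ( -γ'(s)²/4 + r(γ(s),s) ) ds`, provided `u₀` is maximized at `0`
and `r(x,s) ≤ r(0,s)` for `x ≤ 0`. -/
theorem action_posPart_ge
    (t : ℝ) (ht : 0 < t)
    (u₀ : ℝ → ℝ) (hu₀ : ∀ x : ℝ, u₀ x ≤ u₀ 0)
    (r : ℝ → ℝ → ℝ)
    (hr : ContinuousOn (fun p : ℝ × ℝ => r p.1 p.2) (Set.univ ×ˢ Set.Icc 0 t))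
    (hrmax : ∀ x : ℝ, x ≤ 0 → ∀ s ∈ Set.Icc 0 t, r x s ≤ r 0 s)
    (γ : ℝ → ℝ) (L : NNReal) (hγ : LipschitzWith L γ) :
    LipschitzWith L (fun s : ℝ => max (γ s) 0) ∧
      u₀ (max (γ 0) 0) +
          ∫ s in (0:ℝ)..t, (-(deriv (fun x : ℝ => max (γ x) 0) s) ^ 2 / 4
            + r (max (γ s) 0) s) ≥
        u₀ (γ 0) + ∫ s in (0:ℝ)..t, (-(deriv γ s) ^ 2 / 4 + r (γ s) s) := by
  have hlip : LipschitzWith L (fun s : ℝ => max (γ s) 0) := by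
    apply LipschitzWith.of_dist_le_mul
    intro x y
    refine le_trans ?_ (hγ.dist_le_mul x y)
    simp only [Real.dist_eq]
    exact abs_max_sub_max_le_abs _ _ _
  set g : ℝ → ℝ := fun s : ℝ => max (γ s) 0 with hgdef
  -- derivative dichotomy
  have hderiv : ∀ s : ℝ, deriv g s = deriv γ s ∨ deriv g s = 0 := by
    intro s
    rcases le_or_gt (γ s) 0 with h | h
    · right
      have hmin : IsLocalMin g s := by
        refine Filter.Eventually.of_forall fun y => ?_
        simp only [g, max_eq_right h]
        exact le_max_right _ _
      exact hmin.deriv_eq_zero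
    · left
      have : g =ᶠ[nhds s] γ := by
        have : ∀ᶠ y in nhds s, 0 < γ y :=
          (hγ.continuous.tendsto s).eventually (eventually_gt_nhds h)
        filter_upwards [this] with y hy
        simp [g, max_eq_left hy.le]
      exact this.deriv_eq
  -- bounds on derivatives
  have hbound : ∀ (f : ℝ → ℝ), LipschitzWith L f → ∀ s, |deriv f s| ≤ L := by
    intro f hf s
    by_cases hd : DifferentiableAt ℝ f s
    · have h1 : deriv f s = fderiv ℝ f s 1 := by rw [fderiv_apply_one_eq_deriv]
      have h2 : ‖fderiv ℝ f s‖ ≤ L := norm_fderiv_le_of_lipschitz ℝ hf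
      calc |deriv f s| = ‖fderiv ℝ f s 1‖ := by rw [h1]; rfl
        _ ≤ ‖fderiv ℝ f s‖ * ‖(1:ℝ)‖ := (fderiv ℝ f s).le_opNorm 1
        _ ≤ L := by simpa using h2
    · simp [deriv_zero_of_not_differentiableAt hd, NNReal.coe_nonneg]
  -- continuity of r compositions
  have hrcont : ∀ (f : ℝ → ℝ), Continuous f →
      ContinuousOn (fun s => r (f s) s) (Icc 0 t) := by
    intro f hf
    have : ContinuousOn (fun s : ℝ => ((f s, s) : ℝ × ℝ)) (Icc 0 t) :=
      (hf.continuousOn.prodMk continuous_id.continuousOn)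
    exact hr.comp this (fun s hs => ⟨mem_univ _, hs⟩)
  -- integrability
  have hint : ∀ (f : ℝ → ℝ), LipschitzWith L f →
      IntervalIntegrable (fun s => -(deriv f s) ^ 2 / 4 + r (f s) s) volume 0 t := by
    intro f hf
    apply IntervalIntegrable.add
    · rw [intervalIntegrable_iff]
      have hfin : volume (Set.uIoc (0:ℝ) t) < ⊤ := by
        rw [uIoc_of_le ht.le]; exact measure_Ioc_lt_top
      refine Integrable.mono'
        ((integrableOn_const_iff (C := (L:ℝ)^2/4) (by finiteness)).2 (Or.inr hfin)) ?_ ?_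
      · exact ((measurable_deriv f).pow_const 2 |>.neg.div_const 4).aestronglyMeasurable
      · refine Filter.Eventually.of_forall fun s => ?_
        have := hbound f hf s
        have h2 : (deriv f s) ^ 2 ≤ (L:ℝ) ^ 2 := by
          rw [← sq_abs]
          exact pow_le_pow_left₀ (abs_nonneg _) this 2
        rw [Real.norm_eq_abs, abs_div, abs_neg, abs_of_nonneg (sq_nonneg _)]
        simp only [abs_of_nonneg (by norm_num : (0:ℝ) ≤ 4)]
        linarith
    · exact ((hrcont f hf.continuous).mono (by rw [uIcc_of_le ht.le])).intervalIntegrable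
  -- pointwise inequality on Icc
  have hle : ∀ s ∈ Icc 0 t,
      -(deriv γ s) ^ 2 / 4 + r (γ s) s ≤ -(deriv g s) ^ 2 / 4 + r (g s) s := by
    intro s hs
    rcases le_or_gt (γ s) 0 with h | h
    · have hg0 : g s = 0 := max_eq_right h
      have hd0 : deriv g s = 0 := by
        rcases hderiv s with h' | h'
        · rcases le_or_gt (γ s) 0 with _ | h2
          · -- local min argument again
            have hmin : IsLocalMin g s := by
              refine Filter.Eventually.of_forall fun y => ?_
              simp only [g, max_eq_right h]
              exact le_max_right _ _
            exact hmin.deriv_eq_zero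
          · linarith
        · exact h'
      rw [hg0, hd0]
      have h5 := hrmax (γ s) h s hs
      have h4 := sq_nonneg (deriv γ s)
      norm_num
      nlinarith
    · have hg0 : g s = γ s := max_eq_left h.le
      have hd0 : deriv g s = deriv γ s := by
        have : g =ᶠ[nhds s] γ := by
          have : ∀ᶠ y in nhds s, 0 < γ y :=
            (hγ.continuous.tendsto s).eventually (eventually_gt_nhds h)
          filter_upwards [this] with y hy
          simp [g, max_eq_left hy.le]
        exact this.deriv_eq
      rw [hg0, hd0]
  have hint1 := hint γ hγ
  have hint2 := hint g hlip
  have hmono := intervalIntegral.integral_mono_on ht.le hint1 hint2 hle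
  have hu : u₀ (γ 0) ≤ u₀ (max (γ 0) 0) := by
    rcases le_or_gt (γ 0) 0 with h | h
    · rw [max_eq_right h]; exact hu₀ _
    · rw [max_eq_left h.le]
  exact ⟨hlip, by dsimp only [g] at hmono ⊢; linarith⟩
end
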